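/- arXiv:1008.4100 — 4 statements merged into one kernel-verified Lean document; each statement's English description precedes it below -/
import Mathlib

section
/- Let T be a finite set of even cardinality with a fixed-point-free involution, and halfspaces T_e^+ (e ∈ E) as above, each of cardinality |T|/2. A k-subset K of T (with 1 ≤ k ≤ |T| - 1) is a committee if and only if K is a blocking set for the family consisting of all ⌊(|T| - k + 1)/2⌋-subsets of T_e^+, taken over all e ∈ E; that is, K intersects every ⌊(|T|-k+1)/2⌋-subset of every positive halfspace. -/
open Finset

/-- a `k`-subset `K` (with `1 ≤ k ≤ |T| - 1`) is a committee iff it is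
a blocking set for the family of all `⌊(|T|-k+1)/2⌋`-subsets of the positive
halfspaces: `K` meets every `⌊(|T|-k+1)/2⌋`-subset of every `P e`. -/
theorem stmt4 {α E : Type*} [Fintype α] [DecidableEq α] [Nonempty E]
    (neg : α → α) (hinv : ∀ x, neg (neg x) = x) (hfpf : ∀ x, neg x ≠ x)
    (P : E → Finset α) (hP : ∀ e x, x ∈ P e ↔ neg x ∉ P e)
    (k : ℕ) (hk1 : 1 ≤ k) (hk2 : k ≤ Fintype.card α - 1)
    (K : Finset α) (hK : K.card = k) :
    (∀ e : E, k < 2 * (K ∩ P e).card) ↔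
      (∀ e : E, ∀ S : Finset α, S ⊆ P e →
        S.card = (Fintype.card α - k + 1) / 2 → (K ∩ S).Nonempty) := by
  set n := Fintype.card α with hn
  have hcardP : ∀ e, 2 * (P e).card = n := by
    intro e
    have hinj : Function.Injective neg :=
      Function.LeftInverse.injective hinv
    have himg : (P e)ᶜ = (P e).image neg := by
      ext x
      simp only [mem_compl, mem_image]
      constructor
      · intro hx
        refine ⟨neg x, ?_, hinv x⟩
        rw [hP e (neg x), hinv]
        exact hx
      · rintro ⟨y, hy, rfl⟩
        rw [hP e y] at hy
        exact hy
    have h1 : (P e)ᶜ.card = n - (P e).card := card_compl _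
    have h2 : ((P e).image neg).card = (P e).card := card_image_of_injective _ hinj
    have h3 : (P e).card ≤ n := (P e).card_le_univ
    rw [himg, h2] at h1
    omega
  have hkn : k ≤ n - 1 := hk2
  have hn1 : 1 ≤ n := by
    have := K.card_le_univ
    omega
  constructor
  · intro hcom e S hSP hScard
    have h1 := hcom e
    by_contra hempty
    rw [not_nonempty_iff_eq_empty] at hempty
    have hdisj : Disjoint K S := disjoint_left.mpr (fun x hx hxS => by
      have : x ∈ K ∩ S := mem_inter.mpr ⟨hx, hxS⟩
      simp [hempty] at this)
    have hsub : K ∩ P e ⊆ P e \ S := by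
      intro x hx
      rw [mem_inter] at hx
      rw [mem_sdiff]
      exact ⟨hx.2, fun hxS => (disjoint_left.mp hdisj hx.1 hxS)⟩
    have h2 : (K ∩ P e).card ≤ (P e \ S).card := card_le_card hsub
    have h3 : (P e \ S).card = (P e).card - S.card := card_sdiff_of_subset hSP
    have h4 := hcardP e
    have h5 : S.card ≤ (P e).card := card_le_card hSP
    omega
  · intro hblock e
    by_contra hle
    push_neg at hle
    have hKP : (K ∩ P e).card ≤ k / 2 := by omega
    have h4 := hcardP e
    have hKPe : (K ∩ P e).card ≤ (P e).card := card_le_card inter_subset_right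
    set m := (n - k + 1) / 2 with hm
    have hbig : m ≤ (P e \ K).card := by
      have h3 : (P e ∩ K).card + (P e \ K).card = (P e).card :=
        card_inter_add_card_sdiff _ _
      have : (P e ∩ K) = (K ∩ P e) := inter_comm _ _
      rw [this] at h3
      omega
    obtain ⟨S, hSsub, hScard⟩ := exists_subset_card_eq hbig
    have := hblock e S (hSsub.trans sdiff_subset) hScard
    obtain ⟨x, hx⟩ := this
    rw [mem_inter] at hx
    have := hSsub hx.2
    rw [mem_sdiff] at this
    exact this.2 hx.1
end

section
/- Let n, k be positive integers with k ≤ n, let r be a rational with 0 ≤ r < 1, and let Λ be a nonempty antichain of subsets of an n-set S such that every λ ∈ Λ satisfies |λ| ≥ ⌊rk⌋ + 1 and n - |λ| ≥ k - ⌊rk⌋. Define I_{r,k} = { b ⊆ S : |b| = k and |b ∩ λ| > r·k for all λ ∈ Λ }. Then |I_{r,k}| = C(n,k) + Σ_{D} (-1)^{|D|} · C(n - |∪D|, n - k), where the sum is over all nonempty families D of (k - ⌊rk⌋)-subsets of S each of which is contained in the complement of some λ ∈ Λ. -/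
open Finset

lemma count_supersets {α : Type*} [Fintype α] [DecidableEq α] (s : Finset α) (k : ℕ)
    (hs : s.card ≤ k) :
    (((univ : Finset α).powersetCard k).filter (fun b => s ⊆ b)).card
      = Nat.choose (Fintype.card α - s.card) (k - s.card) := by
  have h1 : (((univ : Finset α).powersetCard k).filter (fun b => s ⊆ b)).card
      = (((univ : Finset α) \ s).powersetCard (k - s.card)).card := by
    apply Finset.card_nbij' (fun b => b \ s) (fun d => d ∪ s)
    · intro b hb
      simp only [mem_coe, mem_filter, mem_powersetCard_univ] at hb
      rw [mem_coe, mem_powersetCard]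
      exact ⟨sdiff_subset_sdiff (subset_univ b) le_rfl,
        by rw [card_sdiff_of_subset hb.2, hb.1]⟩
    · intro d hd
      rw [mem_coe, mem_powersetCard] at hd
      have hdisj : Disjoint d s := by
        have := hd.1
        intro u hu1 hu2
        simp only [le_eq_subset, bot_eq_empty, subset_empty, eq_empty_iff_forall_notMem]
        intro x hx
        have := this (hu1 hx)
        simp at this
        exact this (hu2 hx)
      simp only [mem_coe, mem_filter, mem_powersetCard_univ]
      constructor
      · rw [card_union_of_disjoint hdisj, hd.2]
        omega
      · exact subset_union_right
    · intro b hb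
      simp only [mem_coe, mem_filter, mem_powersetCard_univ] at hb
      exact sdiff_union_of_subset hb.2
    · intro d hd
      rw [mem_coe, mem_powersetCard] at hd
      apply union_sdiff_cancel_right
      intro u hu1 hu2
      simp only [le_eq_subset, bot_eq_empty, subset_empty, eq_empty_iff_forall_notMem]
      intro x hx
      have := hd.1 (hu1 hx)
      simp at this
      exact this (hu2 hx)
  rw [h1, Finset.card_powersetCard, card_sdiff_of_subset (subset_univ s), card_univ]

/-- inclusion–exclusion for relatively `r`-blocking `k`-sets, via the
order ideal generated by the complements of the antichain `Λ`. -/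
theorem stmt5 {α : Type*} [Fintype α] [DecidableEq α]
    (n k : ℕ) (hn : n = Fintype.card α) (hk1 : 1 ≤ k) (hkn : k ≤ n)
    (r : ℚ) (hr0 : 0 ≤ r) (hr1 : r < 1)
    (Λ : Finset (Finset α)) (hΛne : Λ.Nonempty)
    (hanti : IsAntichain (· ⊆ ·) (Λ : Set (Finset α)))
    (m : ℕ) (hm : (m : ℤ) = ⌊r * (k : ℚ)⌋)
    (hΛ : ∀ l ∈ Λ, m + 1 ≤ l.card ∧ k - m ≤ n - l.card) :
    ((((univ : Finset α).powersetCard k).filter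
        (fun b => ∀ l ∈ Λ, (r * (k : ℚ) < ((b ∩ l).card : ℚ)))).card : ℤ) =
      (Nat.choose n k : ℤ) +
        ∑ D ∈ ((((univ : Finset α).powersetCard (k - m)).filter
            (fun d => ∃ l ∈ Λ, d ⊆ (univ : Finset α) \ l)).powerset.filter
              (fun D => D.Nonempty)),
          (-1 : ℤ) ^ D.card * Nat.choose (n - (D.sup id).card) (n - k) := by
  set T := (((univ : Finset α).powersetCard (k - m)).filter
      (fun d => ∃ l ∈ Λ, d ⊆ (univ : Finset α) \ l)) with hT
  have hmk : m < k := by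
    have h1 : (m : ℤ) ≤ r * (k : ℚ) := by rw [hm]; exact_mod_cast Int.floor_le _
    have h2 : r * (k : ℚ) < (k : ℚ) := by
      have : (0:ℚ) < (k:ℚ) := by exact_mod_cast hk1
      calc r * (k:ℚ) < 1 * (k:ℚ) := by exact mul_lt_mul_of_pos_right hr1 this
        _ = (k:ℚ) := one_mul _
    have : ((m:ℤ):ℚ) < ((k:ℕ):ℚ) := by
      calc ((m:ℤ):ℚ) ≤ r * (k:ℚ) := by exact_mod_cast h1
        _ < (k:ℚ) := h2
    exact_mod_cast this
  have hmrk : (m : ℚ) ≤ r * (k : ℚ) := by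
    have := Int.floor_le (r * (k:ℚ))
    rw [← hm] at this
    exact_mod_cast this
  -- Step 1: rewrite the predicate
  have hfilter : (((univ : Finset α).powersetCard k).filter
        (fun b => ∀ l ∈ Λ, (r * (k : ℚ) < ((b ∩ l).card : ℚ))))
      = ((univ : Finset α).powersetCard k).filter (fun b => ∀ d ∈ T, ¬ d ⊆ b) := by
    apply filter_congr
    intro b hb
    rw [mem_powersetCard_univ] at hb
    constructor
    · intro h d hd hdb
      rw [hT, mem_filter, mem_powersetCard_univ] at hd
      obtain ⟨hdcard, l, hl, hdl⟩ := hd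
      have hdbl : d ⊆ b \ l := by
        intro x hx
        rw [mem_sdiff]
        refine ⟨hdb hx, ?_⟩
        have := hdl hx
        rw [mem_sdiff] at this
        exact this.2
      have h1 : k - m ≤ (b \ l).card := hdcard ▸ card_le_card hdbl
      have h2 : (b ∩ l).card + (b \ l).card = k := by
        rw [card_inter_add_card_sdiff, hb]
      have h3 : (b ∩ l).card ≤ m := by omega
      have := h l hl
      have h4 : ((b ∩ l).card : ℚ) ≤ (m : ℚ) := by exact_mod_cast h3
      linarith
    · intro h l hl
      by_contra hc
      push_neg at hc
      have h1 : ((b ∩ l).card : ℤ) ≤ (m : ℤ) := by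
        rw [hm]
        apply Int.le_floor.mpr
        exact_mod_cast hc
      have h2 : (b ∩ l).card ≤ m := by exact_mod_cast h1
      have h3 : (b ∩ l).card + (b \ l).card = k := by
        rw [card_inter_add_card_sdiff, hb]
      have h4 : k - m ≤ (b \ l).card := by omega
      obtain ⟨d, hd1, hd2⟩ := exists_subset_card_eq h4
      refine h d ?_ (hd1.trans sdiff_subset)
      rw [hT, mem_filter, mem_powersetCard_univ]
      exact ⟨hd2, l, hl, hd1.trans (sdiff_subset_sdiff (subset_univ b) le_rfl)⟩
  rw [hfilter]
  -- Step 2: card as a sum of products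
  have hcard : ((((univ : Finset α).powersetCard k).filter
        (fun b => ∀ d ∈ T, ¬ d ⊆ b)).card : ℤ)
      = ∑ b ∈ (univ : Finset α).powersetCard k,
          ∏ d ∈ T, ((if d ⊆ b then (-1:ℤ) else 0) + 1) := by
    rw [card_filter]
    push_cast
    apply sum_congr rfl
    intro b _
    by_cases hP : ∀ d ∈ T, ¬ d ⊆ b
    · rw [if_pos hP]
      rw [Finset.prod_eq_one]
      intro d hd
      rw [if_neg (hP d hd)]
      ring
    · rw [if_neg hP]
      push_neg at hP
      obtain ⟨d, hd, hdb⟩ := hP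
      rw [Finset.prod_eq_zero hd]
      rw [if_pos hdb]
      ring
  rw [hcard]
  -- expand the product
  have hexp : ∀ b ∈ (univ : Finset α).powersetCard k,
      ∏ d ∈ T, ((if d ⊆ b then (-1:ℤ) else 0) + 1)
        = ∑ D ∈ T.powerset, (if D.sup id ⊆ b then (-1:ℤ)^D.card else 0) := by
    intro b _
    rw [Finset.prod_add]
    apply sum_congr rfl
    intro D hD
    rw [Finset.prod_const_one, mul_one]
    by_cases h : D.sup id ⊆ b
    · rw [if_pos h]
      have : ∀ d ∈ D, (if d ⊆ b then (-1:ℤ) else 0) = -1 := by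
        intro d hd
        exact if_pos ((Finset.le_sup (f := id) hd).trans h)
      rw [Finset.prod_congr rfl this, Finset.prod_const]
    · rw [if_neg h]
      have : ∃ d ∈ D, ¬ d ⊆ b := by
        by_contra hc
        push_neg at hc
        exact h (Finset.sup_le hc)
      obtain ⟨d, hd, hdb⟩ := this
      apply Finset.prod_eq_zero hd
      exact if_neg hdb
  rw [sum_congr rfl hexp, Finset.sum_comm]
  -- inner sum equals count
  have hinner : ∀ D ∈ T.powerset,
      ∑ b ∈ (univ : Finset α).powersetCard k,
          (if D.sup id ⊆ b then (-1:ℤ)^D.card else 0)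
        = (-1:ℤ)^D.card * Nat.choose (n - (D.sup id).card) (n - k) := by
    intro D hD
    rw [← Finset.sum_filter, Finset.sum_const]
    set s := D.sup id with hs
    have hsn : s.card ≤ n := by rw [hn]; exact card_le_univ s
    by_cases hsk : s.card ≤ k
    · rw [count_supersets s k hsk, ← hn]
      have : Nat.choose (n - s.card) (k - s.card) = Nat.choose (n - s.card) (n - k) := by
        have h1 : n - k ≤ n - s.card := by omega
        have h2 : (n - s.card) - (n - k) = k - s.card := by omega
        rw [← Nat.choose_symm h1, h2]
      rw [this]
      push_cast
      ring
    · have h1 : (((univ : Finset α).powersetCard k).filter (fun b => s ⊆ b)) = ∅ := by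
        rw [Finset.filter_eq_empty_iff]
        intro b hb hsb
        rw [mem_powersetCard_univ] at hb
        have := card_le_card hsb
        omega
      rw [h1]
      have h2 : Nat.choose (n - s.card) (n - k) = 0 := by
        apply Nat.choose_eq_zero_of_lt
        omega
      rw [h2]
      simp
  rw [sum_congr rfl hinner]
  -- split off the empty set
  rw [← Finset.sum_filter_add_sum_filter_not T.powerset (fun D => D.Nonempty)]
  have hempty : T.powerset.filter (fun D => ¬ D.Nonempty) = {∅} := by
    ext D
    simp only [mem_filter, mem_powerset, mem_singleton, not_nonempty_iff_eq_empty]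
    constructor
    · rintro ⟨_, h⟩; exact h
    · rintro rfl; exact ⟨empty_subset _, rfl⟩
  rw [hempty, Finset.sum_singleton]
  simp only [card_empty, pow_zero, one_mul, Finset.sup_empty, bot_eq_empty, card_empty,
    Nat.sub_zero]
  rw [Nat.choose_symm hkn]
  ring
end

section
/- Let n, k be positive integers with k ≤ n, r rational with 0 ≤ r < 1, and Λ a nonempty antichain of subsets of an n-set S with every λ ∈ Λ satisfying ⌊rk⌋ + 1 ≤ |λ| ≤ n + ⌊rk⌋ - k. Let M be the family of inclusion-minimal sets among all (|λ| - ⌊rk⌋)-subsets of λ over all λ ∈ Λ. Then |{ b ⊆ S : |b| = k, |b ∩ λ| > rk for all λ ∈ Λ }| = C(n,k) + Σ_{∅ ≠ D ⊆ M} (-1)^{|D|} C(n - |∪D|, k). -/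
open Finset

/-- inclusion–exclusion for relatively `r`-blocking `k`-sets via the
inclusion-minimal sets among the `(|λ| - ⌊rk⌋)`-subsets of the members of `Λ`. -/
theorem stmt7 {α : Type*} [Fintype α] [DecidableEq α]
    (n k : ℕ) (hn : n = Fintype.card α) (hk1 : 1 ≤ k) (hkn : k ≤ n)
    (r : ℚ) (hr0 : 0 ≤ r) (hr1 : r < 1)
    (Λ : Finset (Finset α)) (hΛne : Λ.Nonempty)
    (hanti : IsAntichain (· ⊆ ·) (Λ : Set (Finset α)))
    (m : ℕ) (hm : (m : ℤ) = ⌊r * (k : ℚ)⌋)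
    (hΛ : ∀ l ∈ Λ, m + 1 ≤ l.card ∧ l.card ≤ n + m - k)
    (F M : Finset (Finset α))
    (hF : F = Λ.biUnion (fun l => l.powersetCard (l.card - m)))
    (hM : M = F.filter (fun θ => ∀ θ' ∈ F, θ' ⊆ θ → θ' = θ)) :
    ((((univ : Finset α).powersetCard k).filter
        (fun b => ∀ l ∈ Λ, (r * (k : ℚ) < ((b ∩ l).card : ℚ)))).card : ℤ) =
      (Nat.choose n k : ℤ) +
        ∑ D ∈ M.powerset.filter (fun D => D.Nonempty),
          (-1 : ℤ) ^ D.card * Nat.choose (n - (D.sup id).card) k := by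
  classical
  -- cast lemma: `r*k < c ↔ m < c` for naturals `c`
  have key : ∀ c : ℕ, r * (k : ℚ) < (c : ℚ) ↔ m < c := by
    intro c
    rw [show ((c : ℚ)) = (((c : ℤ)) : ℚ) by push_cast; ring, ← Int.floor_lt, ← hm]
    exact_mod_cast Iff.rfl
  -- every member of F contains a member of M
  have hMF : M ⊆ F := hM ▸ filter_subset _ _
  have hmin : ∀ θ ∈ F, ∃ θ' ∈ M, θ' ⊆ θ := by
    intro θ hθ
    obtain ⟨θ', hθ'mem, hθ'min⟩ := (F.filter (· ⊆ θ)).exists_min_image Finset.card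
      ⟨θ, by simp [hθ]⟩
    rw [mem_filter] at hθ'mem
    refine ⟨θ', ?_, hθ'mem.2⟩
    rw [hM, mem_filter]
    refine ⟨hθ'mem.1, fun θ'' h'' hsub => ?_⟩
    have hmem : θ'' ∈ F.filter (· ⊆ θ) := mem_filter.2 ⟨h'', hsub.trans hθ'mem.2⟩
    exact eq_of_subset_of_card_le hsub (hθ'min _ hmem)
  -- characterization of good sets
  have hchar : ∀ b : Finset α,
      ((∀ l ∈ Λ, r * (k : ℚ) < ((b ∩ l).card : ℚ)) ↔ ∀ θ ∈ M, ¬ Disjoint θ b) := by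
    intro b
    constructor
    · intro hgood θ hθ hdisj
      have hθF := hMF hθ
      rw [hF, mem_biUnion] at hθF
      obtain ⟨l, hl, hθl⟩ := hθF
      rw [mem_powersetCard] at hθl
      obtain ⟨hθsub, hθcard⟩ := hθl
      have hml : m + 1 ≤ l.card := (hΛ l hl).1
      have h1 : b ∩ l ⊆ l \ θ := by
        intro x hx
        rw [mem_inter] at hx
        rw [mem_sdiff]
        exact ⟨hx.2, fun hxθ => (disjoint_left.1 hdisj) hxθ hx.1⟩
      have h2 := card_le_card h1
      rw [card_sdiff_of_subset hθsub, hθcard] at h2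
      have h3 := (key _).1 (hgood l hl)
      omega
    · intro hmin' l hl
      by_contra hc
      rw [key ((b ∩ l).card)] at hc
      have hc' : (l ∩ b).card ≤ m := by rwa [inter_comm, Nat.not_lt] at hc
      have hml : m + 1 ≤ l.card := (hΛ l hl).1
      have hcards := card_inter_add_card_sdiff l b
      have hle : l.card - m ≤ (l \ b).card := by omega
      obtain ⟨θ, hθsub, hθcard⟩ := Finset.exists_subset_card_eq hle
      have hθF : θ ∈ F := by
        rw [hF, mem_biUnion]
        exact ⟨l, hl, mem_powersetCard.2 ⟨hθsub.trans (sdiff_subset), hθcard⟩⟩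
      obtain ⟨θ', hθ'M, hθ'sub⟩ := hmin θ hθF
      refine hmin' θ' hθ'M (disjoint_left.2 fun x hx hxb => ?_)
      exact (mem_sdiff.1 (hθsub (hθ'sub hx))).2 hxb
  -- rewrite the filter
  have hfilter_eq : (((univ : Finset α).powersetCard k).filter
      (fun b => ∀ l ∈ Λ, (r * (k : ℚ) < ((b ∩ l).card : ℚ)))) =
      (((univ : Finset α).powersetCard k).filter (fun b => ∀ θ ∈ M, ¬ Disjoint θ b)) := by
    apply filter_congr
    intro b _
    exact hchar b
  rw [hfilter_eq]
  -- pointwise inclusion-exclusion expansion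
  have point : ∀ b : Finset α,
      ((if ∀ θ ∈ M, ¬ Disjoint θ b then (1 : ℤ) else 0)) =
      ∑ D ∈ M.powerset, (-1 : ℤ) ^ D.card * (if Disjoint (D.sup id) b then 1 else 0) := by
    intro b
    have h1 : (if ∀ θ ∈ M, ¬ Disjoint θ b then (1 : ℤ) else 0) =
        ∏ θ ∈ M, (if Disjoint θ b then (0 : ℤ) else 1) := by
      by_cases h : ∀ θ ∈ M, ¬ Disjoint θ b
      · rw [if_pos h, eq_comm]
        exact prod_eq_one fun θ hθ => if_neg (h θ hθ)
      · rw [if_neg h]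
        push_neg at h
        obtain ⟨θ, hθ, hd⟩ := h
        exact (prod_eq_zero (f := fun θ => if Disjoint θ b then (0 : ℤ) else 1) hθ (if_pos hd)).symm
    have h2 : ∀ θ ∈ M, (if Disjoint θ b then (0 : ℤ) else 1) =
        (fun θ => -(if Disjoint θ b then (1 : ℤ) else 0)) θ + (fun _ => (1 : ℤ)) θ := by
      intro θ _
      by_cases h : Disjoint θ b <;> simp [h]
    rw [h1, prod_congr rfl h2, prod_add]
    refine sum_congr rfl fun D hD => ?_
    rw [mem_powerset] at hD
    rw [prod_const_one, mul_one]
    have h3 : ∏ θ ∈ D, (-(if Disjoint θ b then (1 : ℤ) else 0)) =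
        (-1 : ℤ) ^ D.card * ∏ θ ∈ D, (if Disjoint θ b then (1 : ℤ) else 0) := by
      rw [prod_congr rfl fun θ _ => (neg_one_mul (if Disjoint θ b then (1 : ℤ) else 0)).symm,
        prod_mul_distrib, prod_const]
    rw [h3, prod_boole]
    congr 1
    have : Disjoint (D.sup id) b ↔ ∀ θ ∈ D, Disjoint θ b := by
      rw [Finset.disjoint_sup_left]
      exact ⟨fun h θ hθ => h hθ, fun h θ hθ => h θ hθ⟩
    simp [this]
  -- count sets disjoint from a fixed set
  have hcount : ∀ T : Finset α,
      (∑ b ∈ (univ : Finset α).powersetCard k, (if Disjoint T b then (1 : ℤ) else 0)) =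
      (Nat.choose (n - T.card) k : ℤ) := by
    intro T
    rw [← Finset.natCast_card_filter]
    have heq : (((univ : Finset α).powersetCard k).filter (fun b => Disjoint T b)) =
        Tᶜ.powersetCard k := by
      ext b
      simp only [mem_filter, mem_powersetCard, subset_univ, true_and]
      rw [← le_compl_iff_disjoint_left]
      exact ⟨fun h => ⟨h.2, h.1⟩, fun h => ⟨h.2, h.1⟩⟩
    rw [heq, card_powersetCard, card_compl, hn]
  -- put it together
  calc (((((univ : Finset α).powersetCard k).filter
        (fun b => ∀ θ ∈ M, ¬ Disjoint θ b)).card : ℤ))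
      = ∑ b ∈ (univ : Finset α).powersetCard k,
          (if ∀ θ ∈ M, ¬ Disjoint θ b then (1 : ℤ) else 0) := Finset.natCast_card_filter _ _
    _ = ∑ b ∈ (univ : Finset α).powersetCard k, ∑ D ∈ M.powerset,
          (-1 : ℤ) ^ D.card * (if Disjoint (D.sup id) b then 1 else 0) := by
        exact sum_congr rfl fun b _ => point b
    _ = ∑ D ∈ M.powerset, (-1 : ℤ) ^ D.card *
          ∑ b ∈ (univ : Finset α).powersetCard k,
            (if Disjoint (D.sup id) b then (1 : ℤ) else 0) := by
        rw [sum_comm]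
        exact sum_congr rfl fun D _ => by rw [mul_sum]
    _ = ∑ D ∈ M.powerset, (-1 : ℤ) ^ D.card * (Nat.choose (n - (D.sup id).card) k : ℤ) := by
        exact sum_congr rfl fun D _ => by rw [hcount]
    _ = (Nat.choose n k : ℤ) +
        ∑ D ∈ M.powerset.filter (fun D => D.Nonempty),
          (-1 : ℤ) ^ D.card * Nat.choose (n - (D.sup id).card) k := by
        rw [← sum_filter_add_sum_filter_not M.powerset (fun D => D.Nonempty)]
        have h0 : M.powerset.filter (fun D => ¬ D.Nonempty) = {∅} := by
          ext D
          simp only [mem_filter, mem_powerset, Finset.not_nonempty_iff_eq_empty,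
            mem_singleton]
          exact ⟨fun h => h.2, fun h => ⟨h ▸ empty_subset _, h⟩⟩
        rw [h0, add_comm]
        simp
end

section
/- Let Λ be a finite family of subsets of a finite index set, let D be a finite family of sets, and suppose each member of D is contained in some member of Λ. Define, for C ⊆ Λ, the predicate 'D ⊆ I(C)' to mean every d ∈ D is contained in some member of C. Let Γ be the family of inclusion-minimal sets among { {i : d ⊆ λ_i} : d ∈ D } where Λ = {λ_1, ..., λ_t}, and let Δ* be the simplicial complex on {1,...,t} whose faces are the complements in {1,...,t} of blocking sets of Γ (equivalently, facets of Δ* are complements of the minimal blocking sets of Γ). Then Σ_{C ⊆ Λ, D ⊆ I(C)} (-1)^{|C|} = (-1)^{t-1} · χ̃(Δ*), where χ̃ denotes the reduced Euler characteristic χ̃(Δ) = Σ_{F ∈ Δ, F ≠ ∅} (-1)^{|F|-1} − 1 computed with the empty face counted. -/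
open Finset

/-- the inner inclusion–exclusion sum `Σ_{C ⊆ Λ : D ⊆ I(C)} (-1)^{|C|}`
equals `(-1)^{t-1}` times the reduced Euler characteristic of the complex `Δ*`
whose faces are the complements of the blocking sets of `Γ`. -/
theorem stmt9 {α : Type*} [DecidableEq α] (t : ℕ) (lam : Fin t → Finset α)
    (D : Finset (Finset α)) (hDne : D.Nonempty)
    (hD : ∀ d ∈ D, ∃ i : Fin t, d ⊆ lam i)
    (N : Finset α → Finset (Fin t))
    (hN : ∀ d, N d = (univ : Finset (Fin t)).filter (fun i => d ⊆ lam i))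
    (Γ : Finset (Finset (Fin t)))
    (hΓ : Γ = (D.image N).filter (fun G => ∀ G' ∈ D.image N, G' ⊆ G → G' = G))
    (Δstar : Finset (Finset (Fin t)))
    (hΔstar : Δstar = (univ : Finset (Fin t)).powerset.filter
      (fun F => ∀ G ∈ Γ, (((univ : Finset (Fin t)) \ F) ∩ G).Nonempty)) :
    (∑ C ∈ (univ : Finset (Fin t)).powerset.filter
        (fun C => ∀ d ∈ D, ∃ i ∈ C, d ⊆ lam i), (-1 : ℤ) ^ C.card) =
      (-1 : ℤ) ^ (t - 1) * ∑ F ∈ Δstar, (-1 : ℤ) ^ (F.card + 1) := by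
  obtain ⟨d0, hd0⟩ := hDne
  obtain ⟨i0, -⟩ := hD d0 hd0
  have ht : 1 ≤ t := i0.pos
  have equiv : ∀ C : Finset (Fin t),
      (∀ d ∈ D, ∃ i ∈ C, d ⊆ lam i) ↔ (∀ G ∈ Γ, (C ∩ G).Nonempty) := by
    intro C
    constructor
    · intro h G hG
      rw [hΓ, mem_filter, mem_image] at hG
      obtain ⟨⟨d, hd, rfl⟩, -⟩ := hG
      obtain ⟨i, hiC, hi⟩ := h d hd
      exact ⟨i, mem_inter.2 ⟨hiC, by rw [hN]; simp [hi]⟩⟩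
    · intro h d hd
      set S := (D.image N).filter (· ⊆ N d) with hS
      have hNdS : N d ∈ S := by
        rw [hS, mem_filter]
        exact ⟨mem_image.2 ⟨d, hd, rfl⟩, subset_rfl⟩
      obtain ⟨G, hGS, hGmin⟩ := S.exists_min_image Finset.card ⟨_, hNdS⟩
      rw [hS, mem_filter] at hGS
      have hGΓ : G ∈ Γ := by
        rw [hΓ, mem_filter]
        refine ⟨hGS.1, fun G' hG' hsub => ?_⟩
        have hG'S : G' ∈ S := by rw [hS, mem_filter]; exact ⟨hG', hsub.trans hGS.2⟩
        exact Finset.eq_of_subset_of_card_le hsub (hGmin G' hG'S)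
      obtain ⟨i, hi⟩ := h G hGΓ
      rw [mem_inter] at hi
      have hiNd := hGS.2 hi.2
      rw [hN, mem_filter] at hiNd
      exact ⟨i, hi.1, hiNd.2⟩
  rw [Finset.mul_sum]
  refine Finset.sum_nbij' (fun C => univ \ C) (fun F => univ \ F) ?_ ?_ ?_ ?_ ?_
  · intro C hC
    simp only [mem_filter, mem_powerset] at hC
    rw [hΔstar, mem_filter, mem_powerset]
    refine ⟨sdiff_subset, fun G hG => ?_⟩
    rw [sdiff_sdiff_right_self, inf_eq_inter, univ_inter]
    exact (equiv C).1 hC.2 G hG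
  · intro F hF
    rw [hΔstar, mem_filter, mem_powerset] at hF
    simp only [mem_filter, mem_powerset]
    exact ⟨sdiff_subset, (equiv _).2 hF.2⟩
  · intro C hC
    simp
  · intro F hF
    simp
  · intro C hC
    have hcard : (univ \ C).card = t - C.card := by
      rw [card_sdiff_of_subset (subset_univ C), card_univ, Fintype.card_fin]
    rw [hcard]
    have hc : C.card ≤ t := by
      simpa using card_le_card (subset_univ C)
    have h1 : (-1 : ℤ) ^ (t - 1) * (-1) ^ (t - C.card + 1) = (-1) ^ (t - 1 + (t - C.card + 1)) :=
      (pow_add (-1 : ℤ) (t - 1) (t - C.card + 1)).symm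
    rw [h1]
    have h2 : t - 1 + (t - C.card + 1) = C.card + 2 * (t - C.card) := by omega
    rw [h2, pow_add, pow_mul]
    simp
end
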